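/- arXiv:1712.08818 — 3 statements merged into one kernel-verified Lean document; each statement's English description precedes it below -/
import Mathlib

section
/- Let σ > 0, let v ∈ ℝ² be a fixed point with s = ‖v‖, and let Y be a centered 2D Gaussian vector with per-coordinate variance σ². Then the law of ‖v+Y‖ has density d ↦ (d/σ²)·exp(−(d²+s²)/(2σ²)) · (1/(2π))·∫₀^{2π} exp( d·s·cos θ / σ² ) dθ with respect to Lebesgue measure on (0,∞) (the Rician density, where the integral factor equals the modified Bessel function I₀(ds/σ²)). -/
open MeasureTheory ProbabilityTheory Real
open scoped ENNReal NNReal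

section Aux

open Set

private theorem rician_lintegral_polar (g : ℝ × ℝ → ℝ≥0∞) :
    ∫⁻ p, g p = ∫⁻ p in polarCoord.target, ENNReal.ofReal p.1 * g (polarCoord.symm p) := by
  set B : ℝ × ℝ → ℝ × ℝ →L[ℝ] ℝ × ℝ := fun p =>
    LinearMap.toContinuousLinearMap (Matrix.toLin (Module.Basis.finTwoProd ℝ) (Module.Basis.finTwoProd ℝ)
      !![cos p.2, -p.1 * sin p.2; sin p.2, p.1 * cos p.2]) with hB
  have hA : ∀ p ∈ polarCoord.target, HasFDerivWithinAt polarCoord.symm (B p) polarCoord.target p :=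
    fun p _ => (hasFDerivAt_polarCoord_symm p).hasFDerivWithinAt
  have B_det : ∀ p, (B p).det = p.1 := by
    intro p
    conv_rhs => rw [← one_mul p.1, ← cos_sq_add_sin_sq p.2]
    simp only [hB, neg_mul, LinearMap.det_toContinuousLinearMap, LinearMap.det_toLin,
      Matrix.det_fin_two_of, sub_neg_eq_add]
    ring
  have hinj : Set.InjOn polarCoord.symm polarCoord.target := polarCoord.symm.injOn
  have himg : polarCoord.symm '' polarCoord.target = polarCoord.source :=
    polarCoord.symm.image_source_eq_target
  have hmt : MeasurableSet polarCoord.target := polarCoord.open_target.measurableSet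
  calc ∫⁻ p, g p = ∫⁻ p in polarCoord.source, g p := by
        rw [← setLIntegral_univ]
        exact (setLIntegral_congr polarCoord_source_ae_eq_univ).symm
    _ = ∫⁻ p in polarCoord.symm '' polarCoord.target, g p := by rw [himg]
    _ = ∫⁻ p in polarCoord.target, ENNReal.ofReal |(B p).det| * g (polarCoord.symm p) :=
        lintegral_image_eq_lintegral_abs_det_fderiv_mul volume hmt hA hinj g
    _ = ∫⁻ p in polarCoord.target, ENNReal.ofReal p.1 * g (polarCoord.symm p) := by
        refine setLIntegral_congr_fun hmt (fun p hp => ?_)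
        rw [B_det, abs_of_pos]
        exact hp.1

private theorem rician_angle_shift_base (b φ : ℝ) :
    ∫ θ in (-π)..π, Real.exp (b * Real.cos (θ - φ))
      = ∫ θ in (0:ℝ)..(2*π), Real.exp (b * Real.cos θ) := by
  have hper : Function.Periodic (fun θ => Real.exp (b * Real.cos θ)) (2 * π) := by
    intro x; simp [Real.cos_add_two_pi]
  rw [intervalIntegral.integral_comp_sub_right (fun θ => Real.exp (b * Real.cos θ)) φ]
  have h1 : (π : ℝ) - φ = (-π - φ) + 2 * π := by ring
  rw [h1]
  rw [show (∫ θ in (0:ℝ)..(2*π), Real.exp (b * Real.cos θ))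
      = ∫ θ in (0:ℝ)..(0 + 2*π), Real.exp (b * Real.cos θ) by norm_num]
  exact hper.intervalIntegral_add_eq (-π - φ) 0

private theorem rician_angle_shift (d s σ φ : ℝ) :
    ∫ θ in (-π)..π, Real.exp (d * s * Real.cos (θ - φ) / σ ^ 2)
      = ∫ θ in (0:ℝ)..(2*π), Real.exp (d * s * Real.cos θ / σ ^ 2) := by
  have e1 : ∀ x : ℝ, d * s * Real.cos x / σ ^ 2 = d * s / σ ^ 2 * Real.cos x :=
    fun x => by ring
  simp_rw [e1]
  exact rician_angle_shift_base (d * s / σ ^ 2) φ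

private theorem rician_exists_polar_rep (v0 v1 s : ℝ) (hs : s = Real.sqrt (v0 ^ 2 + v1 ^ 2)) :
    ∃ φ : ℝ, v0 = s * Real.cos φ ∧ v1 = s * Real.sin φ := by
  by_cases h : v0 = 0 ∧ v1 = 0
  · exact ⟨0, by simp [h.1, h.2, hs]⟩
  · have hpos : 0 < v0 ^ 2 + v1 ^ 2 := by
      rcases not_and_or.mp h with h0 | h1
      · have := sq_pos_of_ne_zero h0; positivity
      · have := sq_pos_of_ne_zero h1; positivity
    set z : ℂ := ⟨v0, v1⟩ with hz
    have hz0 : z ≠ 0 := by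
      intro hzz
      rw [Complex.ext_iff] at hzz
      simp only [hz, Complex.zero_re, Complex.zero_im] at hzz
      exact h hzz
    have habs : ‖z‖ = s := by
      rw [hs, Complex.norm_def, Complex.normSq_mk]
      ring_nf
    have hsne : Real.sqrt (v0 ^ 2 + v1 ^ 2) ≠ 0 := (Real.sqrt_pos.mpr hpos).ne'
    refine ⟨Complex.arg z, ?_, ?_⟩
    · rw [Complex.cos_arg hz0, habs]
      have hre : z.re = v0 := rfl
      rw [hre, hs]; field_simp
    · rw [Complex.sin_arg, habs]
      have him : z.im = v1 := rfl
      rw [him, hs]; field_simp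

private theorem rician_prod_gaussian (V : ℝ≥0) (hV : V ≠ 0) :
    (gaussianReal 0 V).prod (gaussianReal 0 V)
      = (volume : Measure (ℝ × ℝ)).withDensity
          (fun p => gaussianPDF 0 V p.1 * gaussianPDF 0 V p.2) := by
  refine Measure.prod_eq fun s t hs ht => ?_
  rw [withDensity_apply _ (hs.prod ht), Measure.volume_eq_prod, ← Measure.prod_restrict,
    lintegral_prod_mul (measurable_gaussianPDF 0 V).aemeasurable
      (measurable_gaussianPDF 0 V).aemeasurable,
    gaussianReal_of_var_ne_zero 0 hV, withDensity_apply _ hs, withDensity_apply _ ht]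

private theorem rician_pdf_mul (σ : ℝ) (hσ : 0 < σ) (x y : ℝ) :
    gaussianPDFReal 0 ⟨σ ^ 2, sq_nonneg σ⟩ x * gaussianPDFReal 0 ⟨σ ^ 2, sq_nonneg σ⟩ y
      = (2 * π * σ ^ 2)⁻¹ * Real.exp (-(x ^ 2 + y ^ 2) / (2 * σ ^ 2)) := by
  have h2 : (0:ℝ) < 2 * π * σ ^ 2 := by positivity
  simp only [gaussianPDFReal, NNReal.coe_mk, sub_zero]
  change (√(2 * π * σ ^ 2))⁻¹ * Real.exp (-x ^ 2 / (2 * σ ^ 2))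
        * ((√(2 * π * σ ^ 2))⁻¹ * Real.exp (-y ^ 2 / (2 * σ ^ 2))) = _
  rw [show (√(2 * π * σ ^ 2))⁻¹ * Real.exp (-x ^ 2 / (2 * σ ^ 2))
        * ((√(2 * π * σ ^ 2))⁻¹ * Real.exp (-y ^ 2 / (2 * σ ^ 2)))
      = ((√(2 * π * σ ^ 2)) * (√(2 * π * σ ^ 2)))⁻¹
        * (Real.exp (-x ^ 2 / (2 * σ ^ 2)) * Real.exp (-y ^ 2 / (2 * σ ^ 2))) by ring]
  rw [Real.mul_self_sqrt h2.le, ← Real.exp_add]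
  congr 1
  ring_nf

end Aux

/-- `X` is a centered 2D Gaussian vector with per-coordinate variance `σ²`:
its two coordinates are independent real Gaussians with mean `0` and variance `σ²`. -/
def IsCentered2DGaussian {Ω : Type*} [MeasureSpace Ω] (σ : ℝ)
    (X : Ω → EuclideanSpace ℝ (Fin 2)) : Prop :=
  Measurable X ∧
  (∀ i, Measure.map (fun ω => X ω i) ℙ = gaussianReal 0 ⟨σ ^ 2, sq_nonneg σ⟩) ∧
  IndepFun (fun ω => X ω 0) (fun ω => X ω 1) ℙ

theorem norm_shifted_gaussian_rician_density
    {Ω : Type*} [MeasureSpace Ω] [IsProbabilityMeasure (ℙ : Measure Ω)]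
    (σ : ℝ) (hσ : 0 < σ)
    (v : EuclideanSpace ℝ (Fin 2)) (s : ℝ) (hs : s = ‖v‖)
    (Y : Ω → EuclideanSpace ℝ (Fin 2))
    (hY : IsCentered2DGaussian σ Y) :
    Measure.map (fun ω => ‖v + Y ω‖) ℙ
      = (volume.restrict (Set.Ioi (0:ℝ))).withDensity
          (fun d => ENNReal.ofReal
            (d / σ ^ 2 * Real.exp (-(d ^ 2 + s ^ 2) / (2 * σ ^ 2))
              * ((1 / (2 * π)) * ∫ θ in (0:ℝ)..(2 * π),
                  Real.exp (d * s * Real.cos θ / σ ^ 2)))) := by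
  obtain ⟨hYmeas, hYlaw, hYindep⟩ := hY
  set V : ℝ≥0 := ⟨σ ^ 2, sq_nonneg σ⟩ with hVdef
  have hV0 : V ≠ 0 := by
    intro h
    have : (V : ℝ) = 0 := by rw [h]; simp
    rw [hVdef] at this
    change σ ^ 2 = 0 at this
    nlinarith
  -- coordinates and their joint law
  have h0m : Measurable fun ω => Y ω 0 := (measurable_pi_apply 0).comp ((WithLp.measurable_ofLp _ _).comp hYmeas)
  have h1m : Measurable fun ω => Y ω 1 := (measurable_pi_apply 1).comp ((WithLp.measurable_ofLp _ _).comp hYmeas)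
  set Z : Ω → ℝ × ℝ := fun ω => (Y ω 0, Y ω 1) with hZdef
  have hZm : Measurable Z := h0m.prodMk h1m
  have hmapZ : Measure.map Z ℙ = (gaussianReal 0 V).prod (gaussianReal 0 V) := by
    have h := (indepFun_iff_map_prod_eq_prod_map_map h0m.aemeasurable
      h1m.aemeasurable).mp hYindep
    rw [hZdef, h, hYlaw 0, hYlaw 1]
  -- the norm function on ℝ × ℝ
  set w : ℝ × ℝ := (v 0, v 1) with hwdef
  set n : ℝ × ℝ → ℝ := fun q => Real.sqrt (q.1 ^ 2 + q.2 ^ 2) with hndef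
  have hncont : Continuous n :=
    Real.continuous_sqrt.comp ((continuous_fst.pow 2).add (continuous_snd.pow 2))
  set g : ℝ × ℝ → ℝ := fun p => n (w + p) with hgdef
  have hgcont : Continuous g := hncont.comp (continuous_const.add continuous_id)
  have hgm : Measurable g := hgcont.measurable
  have hnorm : (fun ω => ‖v + Y ω‖) = g ∘ Z := by
    funext ω
    simp only [hgdef, hndef, hwdef, hZdef, Function.comp_apply, EuclideanSpace.norm_eq,
      Fin.sum_univ_two, Real.norm_eq_abs, sq_abs, Prod.fst_add, Prod.snd_add]
    congr 2
  rw [hnorm, ← Measure.map_map hgm hZm, hmapZ, rician_prod_gaussian V hV0]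
  -- densities
  set ρ2 : ℝ × ℝ → ℝ≥0∞ := fun p => gaussianPDF 0 V p.1 * gaussianPDF 0 V p.2 with hρ2def
  have hρ2m : Measurable ρ2 :=
    ((measurable_gaussianPDF 0 V).comp measurable_fst).mul
      ((measurable_gaussianPDF 0 V).comp measurable_snd)
  -- s as sqrt of coordinates
  have hs' : s = Real.sqrt ((v 0) ^ 2 + (v 1) ^ 2) := by
    rw [hs, EuclideanSpace.norm_eq, Fin.sum_univ_two, Real.norm_eq_abs, Real.norm_eq_abs,
      sq_abs, sq_abs]
  obtain ⟨φ, hφ0, hφ1⟩ := rician_exists_polar_rep (v 0) (v 1) s hs'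
  have hπ : (0:ℝ) < π := Real.pi_pos
  -- prove equality of measures
  refine Measure.ext fun A hA => ?_
  rw [Measure.map_apply hgm hA, withDensity_apply _ (hgm hA), ← lintegral_indicator (hgm hA)]
  set F : ℝ × ℝ → ℝ≥0∞ := (g ⁻¹' A).indicator ρ2 with hFdef
  have hFm : Measurable F := hρ2m.indicator (hgm hA)
  have htrans : ∫⁻ p, F p = ∫⁻ q, F (q + -w) :=
    (lintegral_add_right_eq_self F (-w)).symm
  rw [htrans, rician_lintegral_polar (fun q => F (q + -w))]
  simp only [polarCoord_symm_apply]
  rw [polarCoord_target, Measure.volume_eq_prod, ← Measure.prod_restrict]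
  have hintm : Measurable fun p : ℝ × ℝ =>
      ENNReal.ofReal p.1 * F ((p.1 * Real.cos p.2, p.1 * Real.sin p.2) + -w) := by
    apply Measurable.mul
    · exact measurable_fst.ennreal_ofReal
    · exact hFm.comp (((continuous_fst.mul (Real.continuous_cos.comp continuous_snd)).prodMk
        (continuous_fst.mul (Real.continuous_sin.comp continuous_snd))).measurable.add_const (-w))
  rw [lintegral_prod _ hintm.aemeasurable]
  -- inner integral computation
  have hinner : ∀ d ∈ Set.Ioi (0:ℝ),
      (∫⁻ θ in Set.Ioo (-π) π,
        ENNReal.ofReal d * F ((d * Real.cos θ, d * Real.sin θ) + -w))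
      = A.indicator (fun x => ENNReal.ofReal
          (x / σ ^ 2 * Real.exp (-(x ^ 2 + s ^ 2) / (2 * σ ^ 2))
            * ((1 / (2 * π)) * ∫ θ in (0:ℝ)..(2 * π),
                Real.exp (x * s * Real.cos θ / σ ^ 2)))) d := by
    intro d hd
    have hd0 : 0 < d := hd
    -- pointwise value of F
    have hFval : ∀ θ : ℝ, F ((d * Real.cos θ, d * Real.sin θ) + -w)
        = A.indicator (fun _ => (1:ℝ≥0∞)) d
          * ENNReal.ofReal (((2 * π * σ ^ 2)⁻¹
              * Real.exp (-(d ^ 2 + s ^ 2) / (2 * σ ^ 2)))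
              * Real.exp (d * s * Real.cos (θ - φ) / σ ^ 2)) := by
      intro θ
      have hgat : g ((d * Real.cos θ, d * Real.sin θ) + -w) = d := by
        simp only [hgdef, hndef]
        have hw : w + ((d * Real.cos θ, d * Real.sin θ) + -w)
            = (d * Real.cos θ, d * Real.sin θ) := by abel
        rw [hw]
        have : (d * Real.cos θ) ^ 2 + (d * Real.sin θ) ^ 2 = d ^ 2 := by
          have := Real.sin_sq_add_cos_sq θ
          nlinarith
        rw [this, Real.sqrt_sq hd0.le]
      have hρat : ρ2 ((d * Real.cos θ, d * Real.sin θ) + -w)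
          = ENNReal.ofReal (((2 * π * σ ^ 2)⁻¹
              * Real.exp (-(d ^ 2 + s ^ 2) / (2 * σ ^ 2)))
              * Real.exp (d * s * Real.cos (θ - φ) / σ ^ 2)) := by
        have hkey : (d * Real.cos θ - v 0) ^ 2 + (d * Real.sin θ - v 1) ^ 2
            = d ^ 2 + s ^ 2 - 2 * d * s * Real.cos (θ - φ) := by
          rw [hφ0, hφ1, Real.cos_sub]
          linear_combination d ^ 2 * Real.sin_sq_add_cos_sq θ
            + s ^ 2 * Real.sin_sq_add_cos_sq φ
        have hfst : ((d * Real.cos θ, d * Real.sin θ) + -w).1 = d * Real.cos θ - v 0 := by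
          simp [hwdef, sub_eq_add_neg]
        have hsnd : ((d * Real.cos θ, d * Real.sin θ) + -w).2 = d * Real.sin θ - v 1 := by
          simp [hwdef, sub_eq_add_neg]
        rw [hρ2def]
        simp only [hfst, hsnd, gaussianPDF]
        rw [← ENNReal.ofReal_mul (gaussianPDFReal_nonneg _ _ _), hVdef,
          rician_pdf_mul σ hσ, hkey]
        refine congrArg ENNReal.ofReal ?_
        rw [show (2 * π * σ ^ 2)⁻¹ * Real.exp (-(d ^ 2 + s ^ 2) / (2 * σ ^ 2))
              * Real.exp (d * s * Real.cos (θ - φ) / σ ^ 2)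
            = (2 * π * σ ^ 2)⁻¹ * Real.exp (-(d ^ 2 + s ^ 2) / (2 * σ ^ 2)
                + d * s * Real.cos (θ - φ) / σ ^ 2) by rw [Real.exp_add]; ring]
        congr 1
        field_simp
        ring
      rw [hFdef]
      by_cases hdA : d ∈ A
      · rw [Set.indicator_of_mem, Set.indicator_of_mem hdA, hρat, one_mul]
        rw [Set.mem_preimage, hgat]; exact hdA
      · rw [Set.indicator_of_notMem, Set.indicator_of_notMem hdA, zero_mul]
        rw [Set.mem_preimage, hgat]; exact hdA
    simp only [hFval]
    -- pull out constants
    set C : ℝ := (2 * π * σ ^ 2)⁻¹ * Real.exp (-(d ^ 2 + s ^ 2) / (2 * σ ^ 2)) with hCdef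
    have hC0 : 0 ≤ C := by positivity
    have hsplit : ∀ θ : ℝ, ENNReal.ofReal (C * Real.exp (d * s * Real.cos (θ - φ) / σ ^ 2))
        = ENNReal.ofReal C * ENNReal.ofReal (Real.exp (d * s * Real.cos (θ - φ) / σ ^ 2)) :=
      fun θ => ENNReal.ofReal_mul hC0
    simp only [hsplit]
    set c : ℝ≥0∞ := ENNReal.ofReal d * (A.indicator (fun _ => (1:ℝ≥0∞)) d
      * ENNReal.ofReal C) with hcdef
    have hconst : ∀ θ : ℝ, ENNReal.ofReal d * (A.indicator (fun _ => (1:ℝ≥0∞)) d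
        * (ENNReal.ofReal C
            * ENNReal.ofReal (Real.exp (d * s * Real.cos (θ - φ) / σ ^ 2))))
        = c * ENNReal.ofReal (Real.exp (d * s * Real.cos (θ - φ) / σ ^ 2)) := by
      intro θ; rw [hcdef]; ring
    simp only [hconst]
    have hindne : A.indicator (fun _ => (1:ℝ≥0∞)) d ≠ ⊤ := by
      by_cases hdA : d ∈ A <;> simp [hdA]
    have hcne : c ≠ ⊤ := by
      rw [hcdef]
      exact ENNReal.mul_ne_top ENNReal.ofReal_ne_top
        (ENNReal.mul_ne_top hindne ENNReal.ofReal_ne_top)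
    rw [lintegral_const_mul' c _ hcne]
    have hIcont : Continuous fun θ : ℝ => Real.exp (d * s * Real.cos (θ - φ) / σ ^ 2) := by
      fun_prop
    have hInt : IntegrableOn (fun θ : ℝ => Real.exp (d * s * Real.cos (θ - φ) / σ ^ 2))
        (Set.Ioo (-π) π) volume :=
      (hIcont.integrableOn_Ioc).mono_set Set.Ioo_subset_Ioc_self
    rw [← ofReal_integral_eq_lintegral_ofReal hInt
      (Filter.Eventually.of_forall fun θ => (Real.exp_pos _).le)]
    have hI : (∫ θ in Set.Ioo (-π) π, Real.exp (d * s * Real.cos (θ - φ) / σ ^ 2))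
        = ∫ θ in (0:ℝ)..(2*π), Real.exp (d * s * Real.cos θ / σ ^ 2) := by
      rw [← MeasureTheory.integral_Ioc_eq_integral_Ioo,
        ← intervalIntegral.integral_of_le (by linarith : -π ≤ π)]
      exact rician_angle_shift d s σ φ
    rw [hI]
    by_cases hdA : d ∈ A
    · rw [hcdef, Set.indicator_of_mem hdA, Set.indicator_of_mem hdA, one_mul]
      rw [← ENNReal.ofReal_mul hd0.le, ← ENNReal.ofReal_mul (by positivity)]
      congr 1
      rw [hCdef]
      have hid : (2 * π * σ ^ 2)⁻¹ = 1 / (2 * π) * (σ ^ 2)⁻¹ := by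
        rw [mul_inv, one_div]
      rw [hid, div_eq_mul_inv]
      ring
    · simp [hcdef, Set.indicator_of_notMem hdA]
  rw [setLIntegral_congr_fun measurableSet_Ioi hinner,
    lintegral_indicator hA, withDensity_apply _ hA]
end

section
/- Let n be a natural number, σ > 0, s_r ≥ 0, P ∈ [0,1], P_t > 0, α > 0, and s ≥ 0. Let V₁,…,Vₙ be i.i.d. positive random variables with density f(v) = (v/σ²)·exp(−(v²+s_r²)/(2σ²)) · (1/(2π))·∫₀^{2π} exp( v·s_r·cos θ / σ² ) dθ on (0,∞); let h₁,…,hₙ be i.i.d. Exp(1) random variables; let B₁,…,Bₙ be i.i.d. Bernoulli random variables with success probability P; and suppose all of these random variables are mutually independent. Then E[exp(−s·Σ_{k=1}^{n} Bₖ·P_t·hₖ·Vₖ^{−α})] = ( P·∫₀^{∞} (1/(1 + s·P_t·v^{−α}))·f(v) dv + 1 − P )^n. -/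
open MeasureTheory ProbabilityTheory Real
open scoped NNReal ENNReal

lemma exp_int_Ioi {b : ℝ} (hb : 0 < b) :
    ∫ x in Set.Ioi (0:ℝ), Real.exp (-(b*x)) = 1/b := by
  have := MeasureTheory.integral_comp_mul_left_Ioi (fun y => Real.exp (-y)) 0 hb
  simp only [mul_zero, integral_exp_neg_Ioi_zero, smul_eq_mul, mul_one] at this
  rw [this]; exact (one_div b).symm

lemma integral_expMeasure_exp {c : ℝ} (hc : 0 ≤ c) :
    ∫ x, Real.exp (-(c*x)) ∂(expMeasure 1) = 1/(1+c) := by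
  rw [expMeasure, gammaMeasure]
  rw [show gammaPDF 1 1 = fun x => ((Real.toNNReal (gammaPDFReal 1 1 x) : ℝ≥0) : ℝ≥0∞) from rfl]
  rw [integral_withDensity_eq_integral_smul ((measurable_gammaPDFReal 1 1).real_toNNReal)]
  have h1 : ∀ x : ℝ, (Real.toNNReal (gammaPDFReal 1 1 x)) • Real.exp (-(c*x))
      = Set.indicator (Set.Ici (0:ℝ)) (fun x => Real.exp (-((1+c)*x))) x := by
    intro x
    rw [NNReal.smul_def, gammaPDFReal]
    by_cases hx : (0:ℝ) ≤ x
    · rw [if_pos hx, Set.indicator_of_mem (Set.mem_Ici.2 hx)]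
      rw [Real.Gamma_one]
      have h2 : (1:ℝ)^(1:ℝ) / 1 * x ^ ((1:ℝ)-1) * Real.exp (-(1*x)) = Real.exp (-x) := by
        simp
      rw [h2, Real.coe_toNNReal _ (Real.exp_nonneg _), smul_eq_mul, ← Real.exp_add]
      ring_nf
    · rw [if_neg hx, Set.indicator_of_notMem (fun h => hx (Set.mem_Ici.1 h))]
      simp
  simp_rw [h1]
  rw [integral_indicator measurableSet_Ici, integral_Ici_eq_integral_Ioi,
    exp_int_Ioi (by linarith : (0:ℝ) < 1 + c)]

lemma withDensity_integral_eq {d : ℝ → ℝ} (hd : Measurable d)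
    (hd0 : ∀ v ∈ Set.Ioi (0:ℝ), 0 ≤ d v) (w : ℝ → ℝ) :
    ∫ x, w x ∂((volume.restrict (Set.Ioi (0:ℝ))).withDensity fun v => ENNReal.ofReal (d v))
      = ∫ v in Set.Ioi (0:ℝ), w v * d v := by
  rw [show (fun v => ENNReal.ofReal (d v)) = fun v => ((Real.toNNReal (d v) : ℝ≥0) : ℝ≥0∞) from
    rfl]
  rw [integral_withDensity_eq_integral_smul hd.real_toNNReal]
  refine setIntegral_congr_fun measurableSet_Ioi (fun v hv => ?_)
  rw [NNReal.smul_def, smul_eq_mul, Real.coe_toNNReal _ (hd0 v hv), mul_comm]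

lemma single_term {Ω : Type*} [MeasureSpace Ω] [IsProbabilityMeasure (ℙ : Measure Ω)]
    (P Pt α s : ℝ) (hP₀ : 0 ≤ P) (hP₁ : P ≤ 1) (hPt : 0 < Pt) (hα : 0 < α) (hs : 0 ≤ s)
    (f : ℝ → ℝ) (hfm : Measurable f) (hf0 : ∀ v ∈ Set.Ioi (0:ℝ), 0 ≤ f v)
    (Bk hk Vk : Ω → ℝ) (hBm : Measurable Bk) (hhm : Measurable hk) (hVm : Measurable Vk)
    (hV : Measure.map Vk ℙ
      = (volume.restrict (Set.Ioi (0:ℝ))).withDensity (fun v => ENNReal.ofReal (f v)))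
    (hh : Measure.map hk ℙ = expMeasure 1)
    (hB : Measure.map Bk ℙ
      = ENNReal.ofReal P • Measure.dirac (1:ℝ) + ENNReal.ofReal (1 - P) • Measure.dirac (0:ℝ))
    (hind1 : IndepFun (fun ω => (Vk ω, hk ω)) Bk ℙ)
    (hind2 : IndepFun Vk hk ℙ) :
    ∫ ω, Real.exp (-(s * (Bk ω * Pt * hk ω * Vk ω ^ (-α)))) ∂ℙ
      = P * (∫ v in Set.Ioi (0:ℝ), (1 / (1 + s * Pt * v ^ (-α))) * f v) + 1 - P := by
  -- a.e. facts
  have hV0 : Measure.map Vk ℙ {v : ℝ | ¬ 0 < v} = 0 := by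
      rw [hV]
      have hz : (volume.restrict (Set.Ioi (0:ℝ))) (Set.Ioi (0:ℝ))ᶜ = 0 := by
        rw [Measure.restrict_apply (measurableSet_Ioi.compl), Set.compl_inter_self]
        exact measure_empty
      have hsub : {v : ℝ | ¬ 0 < v} ⊆ (Set.Ioi (0:ℝ))ᶜ := fun v hv =>
        (Set.mem_compl_iff _ _).2 (by simpa using hv)
      exact measure_mono_null hsub ((withDensity_absolutelyContinuous _ _) hz)
  have aeV : ∀ᵐ ω ∂ℙ, 0 < Vk ω := ae_of_ae_map hVm.aemeasurable (ae_iff.2 hV0)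
  have hh0 : Measure.map hk ℙ {x : ℝ | ¬ 0 ≤ x} = 0 := by
      rw [hh, show {x : ℝ | ¬ 0 ≤ x} = Set.Iio 0 from Set.ext (fun x => not_le)]
      rw [expMeasure, gammaMeasure, withDensity_apply _ measurableSet_Iio]
      exact lintegral_exponentialPDF_of_nonpos le_rfl
  have aeh : ∀ᵐ ω ∂ℙ, 0 ≤ hk ω := ae_of_ae_map hhm.aemeasurable (ae_iff.2 hh0)
  have hB0 : Measure.map Bk ℙ {x : ℝ | ¬ (x = 0 ∨ x = 1)} = 0 := by
      rw [hB]
      have hms : MeasurableSet {x : ℝ | ¬ (x = 0 ∨ x = 1)} := by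
        have : {x : ℝ | ¬ (x = 0 ∨ x = 1)} = ({0, 1} : Set ℝ)ᶜ := by
          ext x; simp [Set.mem_insert_iff]
        rw [this]
        exact (measurableSet_insert.2 (MeasurableSet.singleton 1)).compl
      simp only [Measure.add_apply, Measure.smul_apply, smul_eq_mul]
      rw [Measure.dirac_apply' _ hms, Measure.dirac_apply' _ hms]
      simp
  have aeB : ∀ᵐ ω ∂ℙ, Bk ω = 0 ∨ Bk ω = 1 := ae_of_ae_map hBm.aemeasurable (ae_iff.2 hB0)
  -- map measures are probability measures
  have iV : IsProbabilityMeasure (Measure.map Vk ℙ) := Measure.isProbabilityMeasure_map hVm.aemeasurable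
  have ih : IsProbabilityMeasure (Measure.map hk ℙ) := Measure.isProbabilityMeasure_map hhm.aemeasurable
  have iB : IsProbabilityMeasure (Measure.map Bk ℙ) := Measure.isProbabilityMeasure_map hBm.aemeasurable
  set Z : Ω → ℝ := fun ω => Real.exp (-(s * (Pt * hk ω * Vk ω ^ (-α)))) with hZ
  have hZm : Measurable Z :=
    ((((measurable_const.mul hhm).mul (hVm.pow_const _)).const_mul s).neg).exp
  have hZb : ∀ᵐ ω ∂ℙ, ‖Z ω‖ ≤ 1 := by
    filter_upwards [aeh, aeV] with ω h1 h2
    rw [Real.norm_of_nonneg (Real.exp_nonneg _), Real.exp_le_one_iff]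
    have : 0 ≤ s * (Pt * hk ω * Vk ω ^ (-α)) :=
      mul_nonneg hs (mul_nonneg (mul_nonneg hPt.le h1) (Real.rpow_nonneg h2.le _))
    linarith
  have key : (fun ω => Real.exp (-(s * (Bk ω * Pt * hk ω * Vk ω ^ (-α)))))
      =ᵐ[ℙ] fun ω => Bk ω * Z ω + (1 - Bk ω) := by
    filter_upwards [aeB] with ω hω
    rcases hω with h0 | h1
    · simp [h0]
    · simp [h1, hZ]
  rw [integral_congr_ae key]
  -- integrability
  have hBb : ∀ᵐ ω ∂ℙ, ‖Bk ω‖ ≤ 1 := by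
    filter_upwards [aeB] with ω hω
    rcases hω with h | h <;> simp [h]
  have hBint : Integrable Bk ℙ :=
    Integrable.mono' (integrable_const 1) hBm.aestronglyMeasurable hBb
  have hBZint : Integrable (fun ω => Bk ω * Z ω) ℙ := by
    refine Integrable.mono' (integrable_const 1) (hBm.mul hZm).aestronglyMeasurable ?_
    filter_upwards [hBb, hZb] with ω h1 h2
    calc ‖Bk ω * Z ω‖ = ‖Bk ω‖ * ‖Z ω‖ := norm_mul _ _
    _ ≤ 1 * 1 := mul_le_mul h1 h2 (norm_nonneg _) zero_le_one
    _ = 1 := mul_one 1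
  -- E[B] = P
  have hEB : ∫ ω, Bk ω ∂ℙ = P := by
    have e1 : ∫ ω, Bk ω ∂ℙ = ∫ x, x ∂(Measure.map Bk ℙ) :=
      (integral_map hBm.aemeasurable measurable_id.aestronglyMeasurable).symm
    have hid : Integrable (fun x : ℝ => x) (Measure.map Bk ℙ) := by
      refine Integrable.mono' (integrable_const 1) measurable_id.aestronglyMeasurable ?_
      have h0 : Measure.map Bk ℙ {x : ℝ | ¬ ‖x‖ ≤ 1} = 0 := by
        refine measure_mono_null (fun x hx => ?_) hB0
        simp only [Set.mem_setOf_eq] at hx ⊢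
        rintro (rfl | rfl) <;> simp at hx
      exact ae_iff.2 h0
    rw [e1, hB] at *
    rw [integral_add_measure ((integrable_add_measure.1 hid).1) ((integrable_add_measure.1 hid).2),
      integral_smul_measure, integral_smul_measure, integral_dirac, integral_dirac]
    simp [ENNReal.toReal_ofReal hP₀]
  -- E[Z]
  set gz : ℝ × ℝ → ℝ := fun p => Real.exp (-(s * (Pt * p.2 * p.1 ^ (-α)))) with hgz
  have hgzm : Measurable gz :=
    ((((measurable_const.mul measurable_snd).mul (measurable_fst.pow_const _)).const_mul
      s).neg).exp
  have hZeq : Z = gz ∘ (fun ω => (Vk ω, hk ω)) := rfl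
  have hpairlaw : Measure.map (fun ω => (Vk ω, hk ω)) ℙ
      = (Measure.map Vk ℙ).prod (Measure.map hk ℙ) :=
    (indepFun_iff_map_prod_eq_prod_map_map hVm.aemeasurable hhm.aemeasurable).mp hind2
  have aVmap : ∀ᵐ v ∂(Measure.map Vk ℙ), 0 < v := ae_iff.2 hV0
  have ahmap : ∀ᵐ x ∂(Measure.map hk ℙ), 0 ≤ x := ae_iff.2 hh0
  have aeprod : ∀ᵐ p ∂((Measure.map Vk ℙ).prod (Measure.map hk ℙ)), 0 < p.1 ∧ 0 ≤ p.2 := by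
    refine ae_iff.2 (measure_mono_null (fun p hp => ?_)
      (measure_union_null ?_ ?_ :
        ((Measure.map Vk ℙ).prod (Measure.map hk ℙ))
          (({v : ℝ | ¬ 0 < v} ×ˢ Set.univ) ∪ (Set.univ ×ˢ {x : ℝ | ¬ 0 ≤ x})) = 0))
    · simp only [Set.mem_setOf_eq, not_and_or] at hp
      rcases hp with h | h
      · exact Set.mem_union_left _ ⟨h, Set.mem_univ _⟩
      · exact Set.mem_union_right _ ⟨Set.mem_univ _, h⟩
    · rw [Measure.prod_prod, hV0, zero_mul]
    · rw [Measure.prod_prod, hh0, mul_zero]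
  have hgzint : Integrable gz ((Measure.map Vk ℙ).prod (Measure.map hk ℙ)) := by
    refine Integrable.mono' (integrable_const 1) hgzm.aestronglyMeasurable ?_
    filter_upwards [aeprod] with p hp
    rw [Real.norm_of_nonneg (Real.exp_nonneg _), Real.exp_le_one_iff]
    have : 0 ≤ s * (Pt * p.2 * p.1 ^ (-α)) :=
      mul_nonneg hs (mul_nonneg (mul_nonneg hPt.le hp.2) (Real.rpow_nonneg hp.1.le _))
    linarith
  have hEZ : ∫ ω, Z ω ∂ℙ = ∫ v in Set.Ioi (0:ℝ), (1 / (1 + s * Pt * v ^ (-α))) * f v := by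
    have e1 : ∫ ω, Z ω ∂ℙ = ∫ p, gz p ∂((Measure.map Vk ℙ).prod (Measure.map hk ℙ)) := by
      rw [← hpairlaw, integral_map (hVm.prodMk hhm).aemeasurable hgzm.aestronglyMeasurable]
    rw [e1, MeasureTheory.integral_prod _ hgzint]
    have h2 : (fun v => ∫ x, gz (v, x) ∂(Measure.map hk ℙ))
        =ᵐ[Measure.map Vk ℙ] fun v => 1 / (1 + s * Pt * v ^ (-α)) := by
      filter_upwards [aVmap] with v hv
      have hc : 0 ≤ s * (Pt * v ^ (-α)) :=
        mul_nonneg hs (mul_nonneg hPt.le (Real.rpow_nonneg hv.le _))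
      have harg : (fun x : ℝ => gz (v, x))
          = fun x => Real.exp (-((s * (Pt * v ^ (-α))) * x)) := by
        funext x
        simp only [hgz]
        congr 1
        ring
      rw [harg, hh, integral_expMeasure_exp hc, ← mul_assoc]
    rw [integral_congr_ae h2, hV, withDensity_integral_eq hfm hf0]
  -- E[B * Z] = E[B] * E[Z]
  have hindBZ : IndepFun Bk Z ℙ := (hind1.comp hgzm measurable_id).symm
  have hEBZ : ∫ ω, Bk ω * Z ω ∂ℙ = (∫ ω, Bk ω ∂ℙ) * ∫ ω, Z ω ∂ℙ :=
    hindBZ.integral_mul_eq_mul_integral hBm.aestronglyMeasurable hZm.aestronglyMeasurable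
  have hsub' : Integrable (fun ω => 1 - Bk ω) ℙ := (integrable_const 1).sub hBint
  rw [integral_add hBZint hsub', integral_sub (integrable_const 1) hBint, hEBZ, hEB, hEZ,
    integral_const]
  simp only [measure_univ, probReal_univ, ENNReal.toReal_one, smul_eq_mul, one_mul]
  ring

lemma prod_integral_of_indep {Ω : Type*} [MeasureSpace Ω] [IsProbabilityMeasure (ℙ : Measure Ω)]
    {n : ℕ} (F : Fin n × Fin 3 → Ω → ℝ) (hFm : ∀ p, Measurable (F p))
    (hindep : iIndepFun F ℙ)
    (G : (Fin 3 → ℝ) → ℝ) (hG : Measurable G) (S : Finset (Fin n)) :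
    ∫ ω, ∏ k ∈ S, G (fun j => F (k, j) ω) ∂ℙ
      = ∏ k ∈ S, ∫ ω, G (fun j => F (k, j) ω) ∂ℙ := by
  classical
  induction S using Finset.induction_on with
  | empty => simp
  | insert i S hi ih =>
    have hX1m : Measurable fun ω => G (fun j => F (i, j) ω) :=
      hG.comp (measurable_pi_lambda _ fun j => hFm (i, j))
    have hX2m : Measurable fun ω => ∏ k ∈ S, G (fun j => F (k, j) ω) :=
      Finset.measurable_prod _ fun k _ => hG.comp (measurable_pi_lambda _ fun j => hFm (k, j))
    have hdisj : Disjoint ({i} ×ˢ (Finset.univ : Finset (Fin 3)))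
        (S ×ˢ (Finset.univ : Finset (Fin 3))) := by
      simp only [Finset.disjoint_left, Finset.mem_product, Finset.mem_singleton]
      rintro ⟨k, j⟩ ⟨rfl, -⟩ ⟨hk, -⟩
      exact hi hk
    have hpair := hindep.indepFun_finset _ _ hdisj hFm
    set T1 : Finset (Fin n × Fin 3) := {i} ×ˢ (Finset.univ : Finset (Fin 3)) with hT1
    set T2 : Finset (Fin n × Fin 3) := S ×ˢ (Finset.univ : Finset (Fin 3)) with hT2
    have hm1 : ∀ j : Fin 3, ((i, j) : Fin n × Fin 3) ∈ T1 := fun j => by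
      simp [hT1]
    have hm2 : ∀ (k : {x // x ∈ S}) (j : Fin 3), ((k.1, j) : Fin n × Fin 3) ∈ T2 := fun k j => by
      simp [hT2, k.2]
    set φ : (T1 → ℝ) → ℝ := fun g => G (fun j => g ⟨(i, j), hm1 j⟩) with hφ
    set ψ : (T2 → ℝ) → ℝ := fun g => ∏ k ∈ S.attach, G (fun j => g ⟨(k.1, j), hm2 k j⟩) with hψ
    have hφm : Measurable φ :=
      hG.comp (measurable_pi_lambda _ fun j => measurable_pi_apply _)
    have hψm : Measurable ψ :=
      Finset.measurable_prod _ fun k _ =>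
        hG.comp (measurable_pi_lambda _ fun j => measurable_pi_apply _)
    have hInd : IndepFun (fun ω => G (fun j => F (i, j) ω))
        (fun ω => ∏ k ∈ S, G (fun j => F (k, j) ω)) ℙ := by
      have h2 := hpair.comp hφm hψm
      have e1 : (φ ∘ fun a (x : T1) => F x a) = fun ω => G (fun j => F (i, j) ω) := rfl
      have e2 : (ψ ∘ fun a (x : T2) => F x a) = fun ω => ∏ k ∈ S, G (fun j => F (k, j) ω) := by
        funext ω
        exact Finset.prod_attach S fun k => G (fun j => F (k, j) ω)
      rwa [e1, e2] at h2
    have hmul := hInd.integral_mul_eq_mul_integral hX1m.aestronglyMeasurable hX2m.aestronglyMeasurable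
    simp_rw [Finset.prod_insert hi]
    rw [show (∫ ω, G (fun j => F (i, j) ω) * ∏ k ∈ S, G (fun j => F (k, j) ω) ∂ℙ)
        = ∫ ω, ((fun ω => G (fun j => F (i, j) ω)) * fun ω => ∏ k ∈ S, G (fun j => F (k, j) ω)) ω
          ∂ℙ from rfl, hmul, ih]


theorem chain_intra_cluster_interference_laplace
    {Ω : Type*} [MeasureSpace Ω] [IsProbabilityMeasure (ℙ : Measure Ω)]
    (n : ℕ) (σ s_r P Pt α s : ℝ)
    (hσ : 0 < σ) (hsr : 0 ≤ s_r) (hP₀ : 0 ≤ P) (hP₁ : P ≤ 1)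
    (hPt : 0 < Pt) (hα : 0 < α) (hs : 0 ≤ s)
    -- the Rician density with parameters (s_r, σ²)
    (f : ℝ → ℝ)
    (hf : f = fun v => v / σ ^ 2 * Real.exp (-(v ^ 2 + s_r ^ 2) / (2 * σ ^ 2))
      * ((1 / (2 * π)) * ∫ θ in (0:ℝ)..(2 * π), Real.exp (v * s_r * Real.cos θ / σ ^ 2)))
    (V h B : Fin n → Ω → ℝ)
    (hVm : ∀ k, Measurable (V k)) (hhm : ∀ k, Measurable (h k))
    (hBm : ∀ k, Measurable (B k))
    -- each Vₖ has density f on (0, ∞)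
    (hV : ∀ k, Measure.map (V k) ℙ
      = (volume.restrict (Set.Ioi (0:ℝ))).withDensity (fun v => ENNReal.ofReal (f v)))
    -- each hₖ is Exp(1)
    (hh : ∀ k, Measure.map (h k) ℙ = expMeasure 1)
    -- each Bₖ is Bernoulli with success probability P
    (hB : ∀ k, Measure.map (B k) ℙ
      = ENNReal.ofReal P • Measure.dirac (1:ℝ)
        + ENNReal.ofReal (1 - P) • Measure.dirac (0:ℝ))
    -- all 3n random variables are mutually independent
    (hindep : iIndepFun
        (fun p : Fin n × Fin 3 => ![B p.1, h p.1, V p.1] p.2) ℙ) :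
    (∫ ω, Real.exp (-(s * ∑ k : Fin n, B k ω * Pt * h k ω * (V k ω) ^ (-α))) ∂ℙ)
      = (P * (∫ v in Set.Ioi (0:ℝ), (1 / (1 + s * Pt * v ^ (-α))) * f v) + 1 - P) ^ n := by
  have hfm : Measurable f := by
    subst hf
    apply Measurable.mul
    · exact ((measurable_id.div_const _).mul
        ((((measurable_id.pow_const 2).add_const _).neg.div_const _).exp))
    · apply Measurable.const_mul
      apply Continuous.measurable
      apply intervalIntegral.continuous_parametric_intervalIntegral_of_continuous'
      fun_prop
  have hf0 : ∀ v ∈ Set.Ioi (0:ℝ), 0 ≤ f v := by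
    intro v hv
    subst hf
    have h2 : (0:ℝ) ≤ 2 * π := by positivity
    refine mul_nonneg (mul_nonneg ?_ (Real.exp_nonneg _)) (mul_nonneg (by positivity) ?_)
    · exact div_nonneg (le_of_lt hv) (by positivity)
    · exact intervalIntegral.integral_nonneg h2 (fun θ _ => Real.exp_nonneg _)
  set F : Fin n × Fin 3 → Ω → ℝ := fun p => ![B p.1, h p.1, V p.1] p.2 with hF
  have hFm : ∀ p, Measurable (F p) := by
    rintro ⟨k, j⟩
    fin_cases j
    exacts [hBm k, hhm k, hVm k]
  set G : (Fin 3 → ℝ) → ℝ :=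
    fun g => Real.exp (-(s * (g 0 * Pt * g 1 * g 2 ^ (-α)))) with hG
  have hGm : Measurable G := by
    rw [hG]
    fun_prop
  have hstep1 : ∀ ω, Real.exp (-(s * ∑ k : Fin n, B k ω * Pt * h k ω * (V k ω) ^ (-α)))
      = ∏ k : Fin n, G (fun j => F (k, j) ω) := by
    intro ω
    rw [Finset.mul_sum, ← Finset.sum_neg_distrib, Real.exp_sum]
    exact Finset.prod_congr rfl fun k _ => rfl
  rw [integral_congr_ae (Filter.Eventually.of_forall hstep1),
    prod_integral_of_indep F hFm hindep G hGm Finset.univ]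
  have hterm : ∀ k : Fin n, (∫ ω, G (fun j => F (k, j) ω) ∂ℙ)
      = P * (∫ v in Set.Ioi (0:ℝ), (1 / (1 + s * Pt * v ^ (-α))) * f v) + 1 - P := by
    intro k
    have hne1 : ((k, (2:Fin 3)) : Fin n × Fin 3) ≠ (k, 0) := by
      simp [Prod.ext_iff]
    have hne2 : ((k, (1:Fin 3)) : Fin n × Fin 3) ≠ (k, 0) := by
      simp [Prod.ext_iff]
    have hne3 : ((k, (2:Fin 3)) : Fin n × Fin 3) ≠ (k, 1) := by
      simp [Prod.ext_iff]
    have hind1 : IndepFun (fun ω => (V k ω, h k ω)) (B k) ℙ :=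
      hindep.indepFun_prodMk hFm (k, 2) (k, 1) (k, 0) hne1 hne2
    have hind2 : IndepFun (V k) (h k) ℙ := hindep.indepFun hne3
    exact single_term P Pt α s hP₀ hP₁ hPt hα hs f hfm hf0 (B k) (h k) (V k)
      (hBm k) (hhm k) (hVm k) (hV k) (hh k) (hB k) hind1 hind2
  rw [Finset.prod_congr rfl fun k _ => hterm k, Finset.prod_const, Finset.card_univ,
    Fintype.card_fin]
end

section
/- Let L > 0. For every z ≥ 0, the Lebesgue area of the set { x ∈ [−L,L]² : ‖x‖ ≤ z } equals: π·z² if 0 ≤ z ≤ L; π·z² − 4·( z²·arccos(L/z) − L·√(z² − L²) ) if L ≤ z ≤ √2·L; and 4L² if z ≥ √2·L. Consequently, if Z is uniformly distributed on the square [−L,L]², then P(‖Z‖ ≤ z) equals this area divided by 4L². -/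
open MeasureTheory ProbabilityTheory Real

section SquareDiskAux

open Set

private lemma sq_slice_aux (c : ℝ) :
    volume {y : ℝ | y^2 ≤ c} = ENNReal.ofReal (2 * Real.sqrt c) := by
  rcases le_or_gt 0 c with hc | hc
  · have : {y : ℝ | y^2 ≤ c} = Icc (-Real.sqrt c) (Real.sqrt c) := by
      ext y
      simp only [mem_setOf_eq, mem_Icc, ← abs_le]
      rw [← Real.sqrt_sq_eq_abs, Real.sqrt_le_sqrt_iff hc]
    rw [this, Real.volume_Icc]
    congr 1; ring
  · have h1 : {y : ℝ | y^2 ≤ c} = ∅ := by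
      ext y; simp only [mem_setOf_eq, mem_empty_iff_false, iff_false, not_le]
      exact lt_of_lt_of_le hc (sq_nonneg y)
    rw [h1, measure_empty, Real.sqrt_eq_zero_of_nonpos hc.le, mul_zero, ENNReal.ofReal_zero]

private lemma seg_integral_aux {L z : ℝ} (hL : 0 < L) (hLz : L ≤ z) :
    ∫ x in L..z, 2 * Real.sqrt (z^2 - x^2)
      = z^2 * Real.arccos (L/z) - L * Real.sqrt (z^2 - L^2) := by
  have hz : 0 < z := lt_of_lt_of_le hL hLz
  set F : ℝ → ℝ := fun x => x * Real.sqrt (z^2 - x^2) + z^2 * Real.arcsin (x/z) with hF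
  have hcont : ContinuousOn F (Icc L z) := by
    apply Continuous.continuousOn
    exact (continuous_id.mul ((continuous_const.sub (continuous_pow 2)).sqrt)).add
      (continuous_const.mul (Real.continuous_arcsin.comp (continuous_id.div_const z)))
  have hderiv : ∀ x ∈ Ioo L z, HasDerivAt F (2 * Real.sqrt (z^2 - x^2)) x := by
    intro x hx
    have hx0 : 0 < x := lt_trans hL hx.1
    have hxz : x < z := hx.2
    have hu : 0 < z^2 - x^2 := by nlinarith
    set s := Real.sqrt (z^2 - x^2) with hs
    have hs0 : 0 < s := Real.sqrt_pos.mpr hu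
    have hssq : s^2 = z^2 - x^2 := Real.sq_sqrt hu.le
    have h1 : HasDerivAt (fun x : ℝ => z^2 - x^2) (-(2*x)) x := by
      simpa using ((hasDerivAt_pow 2 x).const_sub (z^2))
    have hsqrt : HasDerivAt (fun x : ℝ => Real.sqrt (z^2 - x^2))
        (1 / (2 * s) * (-(2*x))) x :=
      (Real.hasDerivAt_sqrt hu.ne').comp x h1
    have hmul : HasDerivAt (fun x : ℝ => x * Real.sqrt (z^2 - x^2))
        (1 * s + x * (1 / (2 * s) * (-(2*x)))) x :=
      (hasDerivAt_id x).mul hsqrt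
    have hdiv : HasDerivAt (fun x : ℝ => x / z) (1/z) x := by
      simpa using (hasDerivAt_id x).div_const z
    have hne1 : x / z ≠ -1 := by
      have : 0 < x / z := div_pos hx0 hz
      linarith
    have hne2 : x / z ≠ 1 := by
      have : x / z < 1 := (div_lt_one hz).mpr hxz
      linarith
    have harcsin : HasDerivAt (fun x : ℝ => Real.arcsin (x/z))
        (1 / Real.sqrt (1 - (x/z)^2) * (1/z)) x :=
      by have := (Real.hasDerivAt_arcsin hne1 hne2).comp x hdiv; exact this
    have hsq1 : Real.sqrt (1 - (x/z)^2) = s / z := by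
      rw [show (1 : ℝ) - (x/z)^2 = (z^2 - x^2)/z^2 by field_simp]
      rw [Real.sqrt_div hu.le, Real.sqrt_sq hz.le]
    have htot : HasDerivAt F
        ((1 * s + x * (1 / (2 * s) * (-(2*x)))) + z^2 * (1 / Real.sqrt (1 - (x/z)^2) * (1/z))) x :=
      hmul.add (harcsin.const_mul (z^2))
    convert htot using 1
    rw [hsq1]
    field_simp
    linear_combination hssq
  have hint : IntervalIntegrable (fun x => 2 * Real.sqrt (z^2 - x^2)) volume L z := by
    exact (continuous_const.mul ((continuous_const.sub (continuous_pow 2)).sqrt)).intervalIntegrable _ _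
  rw [intervalIntegral.integral_eq_sub_of_hasDerivAt_of_le hLz hcont hderiv hint]
  have hFz : F z = z^2 * (π/2) := by
    simp [hF, div_self hz.ne', Real.arcsin_one, sub_self, Real.sqrt_zero]
  have hFL : F L = L * Real.sqrt (z^2 - L^2) + z^2 * Real.arcsin (L/z) := rfl
  rw [hFz, hFL, Real.arccos_eq_pi_div_two_sub_arcsin]
  ring

private lemma seg_vol_aux {L z : ℝ} (hL : 0 < L) (hLz : L ≤ z) :
    volume {p : ℝ × ℝ | L < p.1 ∧ p.1^2 + p.2^2 ≤ z^2}
      = ENNReal.ofReal (∫ x in L..z, 2 * Real.sqrt (z^2 - x^2)) := by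
  have hz : 0 < z := lt_of_lt_of_le hL hLz
  have hmeas : MeasurableSet {p : ℝ × ℝ | L < p.1 ∧ p.1^2 + p.2^2 ≤ z^2} := by
    apply MeasurableSet.inter
    · exact measurable_fst measurableSet_Ioi
    · exact measurableSet_le ((measurable_fst.pow_const 2).add (measurable_snd.pow_const 2))
        measurable_const
  rw [Measure.volume_eq_prod, Measure.prod_apply hmeas]
  have hslice : ∀ x : ℝ, volume (Prod.mk x ⁻¹' {p : ℝ × ℝ | L < p.1 ∧ p.1^2 + p.2^2 ≤ z^2})
      = Set.indicator (Ioi L) (fun x => ENNReal.ofReal (2 * Real.sqrt (z^2 - x^2))) x := by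
    intro x
    rcases lt_or_ge L x with h | h
    · have hpre : Prod.mk x ⁻¹' {p : ℝ × ℝ | L < p.1 ∧ p.1^2 + p.2^2 ≤ z^2}
          = {y : ℝ | y^2 ≤ z^2 - x^2} := by
        ext y; simp only [mem_preimage, mem_setOf_eq, h, true_and]; constructor <;> intro <;> linarith
      rw [hpre, sq_slice_aux, Set.indicator_of_mem (mem_Ioi.mpr h)]
    · have hpre : Prod.mk x ⁻¹' {p : ℝ × ℝ | L < p.1 ∧ p.1^2 + p.2^2 ≤ z^2} = ∅ := by
        ext y; simp only [mem_preimage, mem_setOf_eq, mem_empty_iff_false, iff_false, not_and]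
        intro h'; exact absurd h' (not_lt.mpr h)
      rw [hpre, measure_empty, Set.indicator_of_notMem (by simpa using h)]
  simp_rw [hslice]
  rw [lintegral_indicator measurableSet_Ioi]
  rw [show Ioi L = Ioc L z ∪ Ioi z from (Ioc_union_Ioi_eq_Ioi hLz).symm,
    lintegral_union measurableSet_Ioi (Ioc_disjoint_Ioi le_rfl)]
  have h0 : ∫⁻ x in Ioi z, ENNReal.ofReal (2 * Real.sqrt (z^2 - x^2)) = 0 := by
    rw [setLIntegral_congr_fun measurableSet_Ioi (fun x hx => ?_), lintegral_zero]
    have : z^2 - x^2 < 0 := by nlinarith [mem_Ioi.mp hx]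
    rw [Real.sqrt_eq_zero_of_nonpos this.le, mul_zero, ENNReal.ofReal_zero]
  rw [h0, add_zero]
  rw [← ofReal_integral_eq_lintegral_ofReal (f := fun x => 2 * Real.sqrt (z^2 - x^2))
    (Continuous.integrableOn_Ioc (f := fun x => 2 * Real.sqrt (z^2 - x^2)) (continuous_const.mul ((continuous_const.sub (continuous_pow 2)).sqrt)))
    (ae_of_all _ fun x => by positivity)]
  rw [intervalIntegral.integral_of_le hLz]

private lemma vol_transfer_aux (s : Set (ℝ × ℝ)) (hs : MeasurableSet s) :
    volume {x : EuclideanSpace ℝ (Fin 2) | (x 0, x 1) ∈ s} = volume s :=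
  ((volume_preserving_finTwoArrow ℝ).comp
      (EuclideanSpace.volume_preserving_symm_measurableEquiv_toLp (Fin 2))).measure_preimage
      hs.nullMeasurableSet

end SquareDiskAux

theorem square_disk_intersection_area
    {Ω : Type*} [MeasureSpace Ω] [IsProbabilityMeasure (ℙ : Measure Ω)]
    (L : ℝ) (hL : 0 < L) (z : ℝ) (hz : 0 ≤ z)
    (Z : Ω → EuclideanSpace ℝ (Fin 2)) (hZm : Measurable Z)
    -- Z is uniformly distributed on the square [−L, L]²
    (hZ : Measure.map Z ℙ
      = (volume {x : EuclideanSpace ℝ (Fin 2) | ∀ i, |x i| ≤ L})⁻¹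
          • volume.restrict {x : EuclideanSpace ℝ (Fin 2) | ∀ i, |x i| ≤ L}) :
    (z ≤ L →
      volume {x : EuclideanSpace ℝ (Fin 2) | (∀ i, |x i| ≤ L) ∧ ‖x‖ ≤ z}
        = ENNReal.ofReal (π * z ^ 2)) ∧
    (L ≤ z → z ≤ Real.sqrt 2 * L →
      volume {x : EuclideanSpace ℝ (Fin 2) | (∀ i, |x i| ≤ L) ∧ ‖x‖ ≤ z}
        = ENNReal.ofReal
            (π * z ^ 2 - 4 * (z ^ 2 * Real.arccos (L / z)
              - L * Real.sqrt (z ^ 2 - L ^ 2)))) ∧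
    (Real.sqrt 2 * L ≤ z →
      volume {x : EuclideanSpace ℝ (Fin 2) | (∀ i, |x i| ≤ L) ∧ ‖x‖ ≤ z}
        = ENNReal.ofReal (4 * L ^ 2)) ∧
    (ℙ {ω | ‖Z ω‖ ≤ z}).toReal
      = (volume {x : EuclideanSpace ℝ (Fin 2) | (∀ i, |x i| ≤ L) ∧ ‖x‖ ≤ z}).toReal
          / (4 * L ^ 2) := by
  classical
  set M : Set (ℝ × ℝ) := {p : ℝ × ℝ | (|p.1| ≤ L ∧ |p.2| ≤ L) ∧ p.1^2 + p.2^2 ≤ z^2} with hMdef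
  set D : Set (ℝ × ℝ) := {p : ℝ × ℝ | p.1^2 + p.2^2 ≤ z^2} with hDdef
  set Sq : Set (ℝ × ℝ) := {p : ℝ × ℝ | |p.1| ≤ L ∧ |p.2| ≤ L} with hSqdef
  have hsummeas : Measurable fun p : ℝ × ℝ => p.1^2 + p.2^2 :=
    (measurable_fst.pow_const 2).add (measurable_snd.pow_const 2)
  have hD : MeasurableSet D := measurableSet_le hsummeas measurable_const
  have hSq : MeasurableSet Sq :=
    (measurableSet_le measurable_fst.abs measurable_const).inter
      (measurableSet_le measurable_snd.abs measurable_const)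
  have hM : MeasurableSet M := hSq.inter hD
  have hEset : {x : EuclideanSpace ℝ (Fin 2) | (∀ i, |x i| ≤ L) ∧ ‖x‖ ≤ z}
      = {x : EuclideanSpace ℝ (Fin 2) | (x 0, x 1) ∈ M} := by
    ext x
    simp only [Set.mem_setOf_eq, hMdef]
    rw [Fin.forall_fin_two, EuclideanSpace.norm_eq, Fin.sum_univ_two, Real.norm_eq_abs,
      Real.norm_eq_abs, sq_abs, sq_abs, Real.sqrt_le_left hz]
  have hvolM : volume {x : EuclideanSpace ℝ (Fin 2) | (∀ i, |x i| ≤ L) ∧ ‖x‖ ≤ z}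
      = volume M := by
    rw [hEset]; exact vol_transfer_aux _ hM
  have hvolD : volume D = ENNReal.ofReal (π * z^2) := by
    have h : {x : EuclideanSpace ℝ (Fin 2) | (x 0, x 1) ∈ D} = Metric.closedBall 0 z := by
      ext x
      simp only [Set.mem_setOf_eq, hDdef, Metric.mem_closedBall, dist_zero_right]
      rw [EuclideanSpace.norm_eq, Fin.sum_univ_two, Real.norm_eq_abs, Real.norm_eq_abs,
        sq_abs, sq_abs, Real.sqrt_le_left hz]
    rw [← vol_transfer_aux _ hD, h, EuclideanSpace.volume_closedBall]
    simp only [Fintype.card_fin]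
    rw [show ((2:ℕ) : ℝ)/2 + 1 = 2 by norm_num, Real.Gamma_two, ← ENNReal.ofReal_pow hz,
      ← ENNReal.ofReal_mul (by positivity)]
    congr 1
    rw [Real.sq_sqrt Real.pi_nonneg]
    ring
  have hvolSq : volume Sq = ENNReal.ofReal (4 * L^2) := by
    have h : Sq = Set.Icc (-L) L ×ˢ Set.Icc (-L) L := by
      ext p
      simp only [hSqdef, Set.mem_setOf_eq, Set.mem_prod, Set.mem_Icc, abs_le]
    rw [h, Measure.volume_eq_prod, Measure.prod_prod, Real.volume_Icc,
      ← ENNReal.ofReal_mul (by linarith)]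
    congr 1
    ring
  refine ⟨?_, ?_, ?_, ?_⟩
  · -- case z ≤ L
    intro hzL
    have hMD : M = D := by
      ext p
      simp only [hMdef, hDdef, Set.mem_setOf_eq]
      constructor
      · exact fun h => h.2
      · intro h
        refine ⟨⟨?_, ?_⟩, h⟩
        · have h1 : p.1^2 ≤ z^2 := by nlinarith [sq_nonneg p.2]
          have := Real.sqrt_le_sqrt h1
          rw [Real.sqrt_sq_eq_abs, Real.sqrt_sq hz] at this
          linarith
        · have h1 : p.2^2 ≤ z^2 := by nlinarith [sq_nonneg p.1]
          have := Real.sqrt_le_sqrt h1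
          rw [Real.sqrt_sq_eq_abs, Real.sqrt_sq hz] at this
          linarith
    rw [hvolM, hMD, hvolD]
  · -- middle case
    intro hLz hzs
    have hzpos : 0 < z := lt_of_lt_of_le hL hLz
    have hz2 : z^2 ≤ 2 * L^2 := by
      have h2 : (0:ℝ) ≤ Real.sqrt 2 * L := by positivity
      have := pow_le_pow_left₀ hz hzs 2
      rw [mul_pow, Real.sq_sqrt (by norm_num : (0:ℝ) ≤ 2)] at this
      linarith
    set A1 : Set (ℝ × ℝ) := {p : ℝ × ℝ | L < p.1 ∧ p.1^2 + p.2^2 ≤ z^2} with hA1def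
    set A2 : Set (ℝ × ℝ) := {p : ℝ × ℝ | p.1 < -L ∧ p.1^2 + p.2^2 ≤ z^2} with hA2def
    set A3 : Set (ℝ × ℝ) := {p : ℝ × ℝ | L < p.2 ∧ p.1^2 + p.2^2 ≤ z^2} with hA3def
    set A4 : Set (ℝ × ℝ) := {p : ℝ × ℝ | p.2 < -L ∧ p.1^2 + p.2^2 ≤ z^2} with hA4def
    have hA1 : MeasurableSet A1 :=
      (measurable_fst measurableSet_Ioi).inter hD
    have hA2 : MeasurableSet A2 :=
      (measurable_fst measurableSet_Iio).inter hD
    have hA3 : MeasurableSet A3 :=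
      (measurable_snd measurableSet_Ioi).inter hD
    have hA4 : MeasurableSet A4 :=
      (measurable_snd measurableSet_Iio).inter hD
    have hunion : D = M ∪ (A1 ∪ (A2 ∪ (A3 ∪ A4))) := by
      ext p
      simp only [hMdef, hA1def, hA2def, hA3def, hA4def, hDdef, Set.mem_setOf_eq, Set.mem_union]
      constructor
      · intro hp
        rcases le_or_gt (|p.1|) L with h1 | h1
        · rcases le_or_gt (|p.2|) L with h2 | h2
          · exact Or.inl ⟨⟨h1, h2⟩, hp⟩
          · rcases lt_abs.mp h2 with h3 | h3
            · exact Or.inr (Or.inr (Or.inr (Or.inl ⟨h3, hp⟩)))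
            · exact Or.inr (Or.inr (Or.inr (Or.inr ⟨by linarith, hp⟩)))
        · rcases lt_abs.mp h1 with h3 | h3
          · exact Or.inr (Or.inl ⟨h3, hp⟩)
          · exact Or.inr (Or.inr (Or.inl ⟨by linarith, hp⟩))
      · rintro (h | h | h | h | h) <;> exact h.2
    have habs : ∀ a : ℝ, L < |a| → L^2 < a^2 := by
      intro a ha
      have h0 : (0:ℝ) ≤ |a| := abs_nonneg a
      calc L^2 < |a|^2 := by nlinarith
        _ = a^2 := sq_abs a
    have dM : Disjoint M (A1 ∪ (A2 ∪ (A3 ∪ A4))) := by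
      rw [Set.disjoint_left]
      intro p hp hp'
      obtain ⟨⟨h1, h2⟩, _⟩ := hp
      rcases hp' with h | h | h | h
      · exact absurd h.1 (not_lt.mpr (le_of_abs_le h1))
      · exact absurd h.1 (not_lt.mpr (neg_le_of_abs_le h1))
      · exact absurd h.1 (not_lt.mpr (le_of_abs_le h2))
      · exact absurd h.1 (not_lt.mpr (neg_le_of_abs_le h2))
    have d12 : Disjoint A1 (A2 ∪ (A3 ∪ A4)) := by
      rw [Set.disjoint_left]
      intro p hp hp'
      have h1 : L^2 < p.1^2 := habs _ (lt_of_lt_of_le hp.1 (le_abs_self _))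
      rcases hp' with h | h | h
      · linarith [hp.1, h.1]
      · have h2 : L^2 < p.2^2 := habs _ (lt_of_lt_of_le h.1 (le_abs_self _))
        nlinarith [hp.2]
      · have h2 : L^2 < p.2^2 := habs _ (by rw [abs_of_nonpos (by linarith [h.1] : p.2 ≤ 0)]; linarith [h.1])
        nlinarith [hp.2]
    have d23 : Disjoint A2 (A3 ∪ A4) := by
      rw [Set.disjoint_left]
      intro p hp hp'
      have h1 : L^2 < p.1^2 := habs _ (by rw [abs_of_nonpos (by linarith [hp.1] : p.1 ≤ 0)]; linarith [hp.1])
      rcases hp' with h | h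
      · have h2 : L^2 < p.2^2 := habs _ (lt_of_lt_of_le h.1 (le_abs_self _))
        nlinarith [hp.2]
      · have h2 : L^2 < p.2^2 := habs _ (by rw [abs_of_nonpos (by linarith [h.1] : p.2 ≤ 0)]; linarith [h.1])
        nlinarith [hp.2]
    have d34 : Disjoint A3 A4 := by
      rw [Set.disjoint_left]
      intro p hp hp'
      linarith [hp.1, hp'.1]
    have hsum : volume D = volume M + (volume A1 + (volume A2 + (volume A3 + volume A4))) := by
      rw [hunion, measure_union dM (hA1.union (hA2.union (hA3.union hA4))),
        measure_union d12 (hA2.union (hA3.union hA4)), measure_union d23 (hA3.union hA4),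
        measure_union d34 hA4]
    set I : ℝ := ∫ x in L..z, 2 * Real.sqrt (z^2 - x^2) with hIdef
    have hInonneg : 0 ≤ I :=
      intervalIntegral.integral_nonneg hLz (fun x _ => by positivity)
    have hvA1 : volume A1 = ENNReal.ofReal I := seg_vol_aux hL hLz
    have hmpneg : MeasurePreserving (Prod.map (Neg.neg : ℝ → ℝ) (id : ℝ → ℝ))
        (volume : Measure (ℝ × ℝ)) volume := by
      rw [Measure.volume_eq_prod]
      exact (Measure.measurePreserving_neg _).prod (MeasurePreserving.id _)
    have hmpswap : MeasurePreserving (Prod.swap : ℝ × ℝ → ℝ × ℝ)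
        (volume : Measure (ℝ × ℝ)) volume := by
      rw [Measure.volume_eq_prod]
      exact Measure.measurePreserving_swap
    have hvA2 : volume A2 = ENNReal.ofReal I := by
      have hpre : Prod.map (Neg.neg : ℝ → ℝ) (id : ℝ → ℝ) ⁻¹' A1 = A2 := by
        ext p
        simp only [hA1def, hA2def, Set.mem_preimage, Set.mem_setOf_eq, Prod.map_fst,
          Prod.map_snd, id_eq, neg_sq]
        constructor
        · rintro ⟨h1, h2⟩; exact ⟨by linarith, h2⟩
        · rintro ⟨h1, h2⟩; exact ⟨by linarith, h2⟩
      rw [← hpre, hmpneg.measure_preimage hA1.nullMeasurableSet, hvA1]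
    have hvA3 : volume A3 = ENNReal.ofReal I := by
      have hpre : (Prod.swap : ℝ × ℝ → ℝ × ℝ) ⁻¹' A1 = A3 := by
        ext p
        simp only [hA1def, hA3def, Set.mem_preimage, Set.mem_setOf_eq, Prod.fst_swap,
          Prod.snd_swap]
        constructor
        · rintro ⟨h1, h2⟩; exact ⟨h1, by linarith⟩
        · rintro ⟨h1, h2⟩; exact ⟨h1, by linarith⟩
      rw [← hpre, hmpswap.measure_preimage hA1.nullMeasurableSet, hvA1]
    have hvA4 : volume A4 = ENNReal.ofReal I := by
      have hpre : (Prod.swap : ℝ × ℝ → ℝ × ℝ) ⁻¹' A2 = A4 := by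
        ext p
        simp only [hA2def, hA4def, Set.mem_preimage, Set.mem_setOf_eq, Prod.fst_swap,
          Prod.snd_swap]
        constructor
        · rintro ⟨h1, h2⟩; exact ⟨h1, by linarith⟩
        · rintro ⟨h1, h2⟩; exact ⟨h1, by linarith⟩
      rw [← hpre, hmpswap.measure_preimage hA2.nullMeasurableSet, hvA2]
    rw [hvolD, hvA1, hvA2, hvA3, hvA4] at hsum
    have hfour : ENNReal.ofReal I + (ENNReal.ofReal I + (ENNReal.ofReal I + ENNReal.ofReal I))
        = ENNReal.ofReal (4 * I) := by
      rw [ENNReal.ofReal_mul (by norm_num : (0:ℝ) ≤ 4)]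
      rw [show ENNReal.ofReal (4:ℝ) = 4 from by norm_num]
      ring
    rw [hfour] at hsum
    have hMvol : volume M = ENNReal.ofReal (π * z^2) - ENNReal.ofReal (4 * I) :=
      ENNReal.eq_sub_of_add_eq ENNReal.ofReal_ne_top hsum.symm
    rw [hvolM, hMvol, ← ENNReal.ofReal_sub _ (by positivity)]
    congr 1
    rw [hIdef, seg_integral_aux hL hLz]
  · -- case sqrt 2 * L ≤ z
    intro hzs
    have h2L : 2 * L^2 ≤ z^2 := by
      have h2 : (0:ℝ) ≤ Real.sqrt 2 * L := by positivity
      have := pow_le_pow_left₀ h2 hzs 2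
      rw [mul_pow, Real.sq_sqrt (by norm_num : (0:ℝ) ≤ 2)] at this
      linarith
    have hMSq : M = Sq := by
      ext p
      simp only [hMdef, hSqdef, Set.mem_setOf_eq]
      constructor
      · exact fun h => h.1
      · intro h
        refine ⟨h, ?_⟩
        have h1 : p.1^2 ≤ L^2 := by
          have := h.1
          rw [abs_le] at this
          nlinarith [this.1, this.2]
        have h2 : p.2^2 ≤ L^2 := by
          have := h.2
          rw [abs_le] at this
          nlinarith [this.1, this.2]
        linarith
    rw [hvolM, hMSq, hvolSq]
  · -- probability
    have hB : MeasurableSet {x : EuclideanSpace ℝ (Fin 2) | ‖x‖ ≤ z} :=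
      measurableSet_le measurable_norm measurable_const
    have hSset : {x : EuclideanSpace ℝ (Fin 2) | ∀ i, |x i| ≤ L}
        = {x : EuclideanSpace ℝ (Fin 2) | (x 0, x 1) ∈ Sq} := by
      ext x
      simp only [Set.mem_setOf_eq, hSqdef]
      rw [Fin.forall_fin_two]
    have hvolS : volume {x : EuclideanSpace ℝ (Fin 2) | ∀ i, |x i| ≤ L}
        = ENNReal.ofReal (4 * L^2) := by
      rw [hSset, vol_transfer_aux _ hSq, hvolSq]
    have hset : {ω | ‖Z ω‖ ≤ z} = Z ⁻¹' {x : EuclideanSpace ℝ (Fin 2) | ‖x‖ ≤ z} := rfl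
    rw [hset, ← Measure.map_apply hZm hB, hZ, Measure.smul_apply, Measure.restrict_apply hB,
      smul_eq_mul]
    have hBS : {x : EuclideanSpace ℝ (Fin 2) | ‖x‖ ≤ z}
          ∩ {x : EuclideanSpace ℝ (Fin 2) | ∀ i, |x i| ≤ L}
        = {x : EuclideanSpace ℝ (Fin 2) | (∀ i, |x i| ≤ L) ∧ ‖x‖ ≤ z} := by
      ext x
      simp only [Set.mem_inter_iff, Set.mem_setOf_eq]
      tauto
    rw [hBS, hvolS, ENNReal.toReal_mul, ENNReal.toReal_inv,
      ENNReal.toReal_ofReal (by positivity)]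
    ring
end
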